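/- For every integer k ≥ 1, the function μ ↦ 2 cos(2μ) − μ sin(2μ) has exactly one zero in the open interval ((k−1)π/2, kπ/2); equivalently, there exists a unique ν_k ∈ ((k−1)π/2, kπ/2) satisfying the characteristic equation ν_k sin(2ν_k) = 2 cos(2ν_k) (i.e. ν_k = 2 cot(2ν_k)). Consequently the sequence (ν_k) is strictly increasing. -/

import Mathlib

open Real Set

/-- For every integer `k ≥ 1`, the function `μ ↦ 2 cos(2μ) − μ sin(2μ)` has exactly one zero
in `((k−1)π/2, kπ/2)`; consequently any sequence of such roots is strictly increasing. -/
theorem neumann_char_unique_root :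
    (∀ k : ℕ, 1 ≤ k → ∃! μ : ℝ, μ ∈ Ioo ((((k : ℝ)) - 1) * π / 2) (((k : ℝ)) * π / 2) ∧
      2 * Real.cos (2 * μ) - μ * Real.sin (2 * μ) = 0) ∧
    (∀ ν : ℕ → ℝ,
      (∀ k : ℕ, 1 ≤ k → ν k ∈ Ioo ((((k : ℝ)) - 1) * π / 2) (((k : ℝ)) * π / 2) ∧
        ν k * Real.sin (2 * ν k) = 2 * Real.cos (2 * ν k)) →
      StrictMonoOn ν (Set.Ici 1)) := by
  have hπ := Real.pi_pos
  constructor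
  · intro k hk
    set a : ℝ := ((k : ℝ) - 1) * π / 2 with ha
    set b : ℝ := (k : ℝ) * π / 2 with hb
    have hab : a < b := by
      rw [ha, hb]
      have h1 : ((k : ℝ)) - 1 < (k : ℝ) := by linarith
      nlinarith
    -- sin (2 μ) ≠ 0 on Ioo a b
    have hsin : ∀ μ ∈ Ioo a b, Real.sin (2 * μ) ≠ 0 := by
      intro μ hμ h0
      rw [Real.sin_eq_zero_iff] at h0
      obtain ⟨n, hn⟩ := h0
      have hμ1 : ((k : ℝ) - 1) * π < 2 * μ := by rw [ha] at hμ; linarith [hμ.1]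
      have hμ2 : 2 * μ < (k : ℝ) * π := by rw [hb] at hμ; linarith [hμ.2]
      rw [← hn] at hμ1 hμ2
      have h1 : ((k : ℝ)) - 1 < (n : ℝ) := lt_of_mul_lt_mul_right hμ1 hπ.le
      have h2 : (n : ℝ) < (k : ℝ) := lt_of_mul_lt_mul_right hμ2 hπ.le
      have h1' : (k : ℤ) - 1 < n := by exact_mod_cast h1
      have h2' : n < (k : ℤ) := by exact_mod_cast h2
      omega
    set f : ℝ → ℝ := fun μ => 2 * Real.cos (2 * μ) - μ * Real.sin (2 * μ) with hf
    have hcont : Continuous f := by fun_prop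
    -- endpoint values
    obtain ⟨m, rfl⟩ : ∃ m, k = m + 1 := ⟨k - 1, by omega⟩
    have h2a : 2 * a = (m : ℝ) * π := by rw [ha]; push_cast; ring
    have h2b : 2 * b = ((m : ℝ) + 1) * π := by rw [hb]; push_cast; ring
    have hfa : f a = 2 * (-1 : ℝ) ^ m := by
      rw [hf]
      simp only [h2a]
      rw [Real.sin_nat_mul_pi]
      have : Real.cos ((m : ℝ) * π) = (-1 : ℝ) ^ m := by
        simpa using Real.cos_nat_mul_pi_sub 0 m
      rw [this]; ring
    have hfb : f b = 2 * (-1 : ℝ) ^ (m + 1) := by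
      rw [hf]
      simp only [h2b]
      have hs : Real.sin (((m : ℝ) + 1) * π) = 0 := by
        have := Real.sin_nat_mul_pi (m + 1); push_cast at this; simpa using this
      have hc : Real.cos (((m : ℝ) + 1) * π) = (-1 : ℝ) ^ (m + 1) := by
        have := Real.cos_nat_mul_pi_sub 0 (m + 1); push_cast at this ⊢; simpa using this
      rw [hs, hc]; ring
    -- existence via IVT
    have hex : ∃ μ ∈ Ioo a b, f μ = 0 := by
      rcases Nat.even_or_odd m with hm | hm
      · have h1 : f a = 2 := by rw [hfa, hm.neg_one_pow]; ring
        have h2 : f b = -2 := by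
          rw [hfb]
          have : Odd (m + 1) := Even.add_one hm
          rw [this.neg_one_pow]; ring
        have := intermediate_value_Ioo' hab.le hcont.continuousOn
        have h0 : (0 : ℝ) ∈ Ioo (f b) (f a) := by rw [h1, h2]; constructor <;> norm_num
        obtain ⟨μ, hμ, hμ0⟩ := this h0
        exact ⟨μ, hμ, hμ0⟩
      · have h1 : f a = -2 := by rw [hfa, hm.neg_one_pow]; ring
        have h2 : f b = 2 := by
          rw [hfb]
          have : Even (m + 1) := hm.add_one
          rw [this.neg_one_pow]; ring
        have := intermediate_value_Ioo hab.le hcont.continuousOn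
        have h0 : (0 : ℝ) ∈ Ioo (f a) (f b) := by rw [h1, h2]; constructor <;> norm_num
        obtain ⟨μ, hμ, hμ0⟩ := this h0
        exact ⟨μ, hμ, hμ0⟩
    -- strict anti of h = 2 cos / sin - id
    set g : ℝ → ℝ := fun μ => 2 * Real.cos (2 * μ) / Real.sin (2 * μ) - μ with hg
    have hganti : StrictAntiOn g (Ioo a b) := by
      apply strictAntiOn_of_deriv_neg (convex_Ioo a b)
      · apply ContinuousOn.sub _ continuousOn_id
        exact ContinuousOn.div (by fun_prop) (by fun_prop) hsin
      · intro x hx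
        rw [interior_Ioo] at hx
        have hne := hsin x hx
        have h2x : HasDerivAt (fun μ : ℝ => 2 * μ) 2 x := by
          simpa using (hasDerivAt_id x).const_mul 2
        have hc : HasDerivAt (fun μ => Real.cos (2 * μ)) (-Real.sin (2 * x) * 2) x :=
          (Real.hasDerivAt_cos (2 * x)).comp x h2x
        have hs : HasDerivAt (fun μ => Real.sin (2 * μ)) (Real.cos (2 * x) * 2) x :=
          (Real.hasDerivAt_sin (2 * x)).comp x h2x
        have hq := (hc.const_mul 2).div hs hne
        have hh : HasDerivAt g
            ((2 * (-Real.sin (2 * x) * 2) * Real.sin (2 * x)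
              - 2 * Real.cos (2 * x) * (Real.cos (2 * x) * 2)) / Real.sin (2 * x) ^ 2 - 1) x := by
          exact (hq.sub (hasDerivAt_id x)).congr_deriv (by ring)
        rw [hh.deriv]
        have hs2 : 0 < Real.sin (2 * x) ^ 2 :=
          lt_of_le_of_ne (sq_nonneg _) (Ne.symm (pow_ne_zero 2 hne))
        have hnum : 2 * (-Real.sin (2 * x) * 2) * Real.sin (2 * x)
            - 2 * Real.cos (2 * x) * (Real.cos (2 * x) * 2) = -4 := by
          nlinarith [Real.sin_sq_add_cos_sq (2 * x)]
        rw [hnum]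
        have : (-4 : ℝ) / Real.sin (2 * x) ^ 2 < 0 := div_neg_of_neg_of_pos (by norm_num) hs2
        linarith
    obtain ⟨μ, hμ, hμ0⟩ := hex
    have hroot_g : ∀ x ∈ Ioo a b, f x = 0 → g x = 0 := by
      intro x hx hfx
      have hne := hsin x hx
      rw [hg]
      have hfx' : 2 * Real.cos (2 * x) - x * Real.sin (2 * x) = 0 := hfx
      field_simp
      linear_combination hfx'
    refine ⟨μ, ⟨hμ, hμ0⟩, ?_⟩
    rintro y ⟨hy, hy0⟩
    exact hganti.injOn hy hμ (by rw [hroot_g y hy hy0, hroot_g μ hμ hμ0])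
  · intro ν hν i hi j hj hij
    have h1 := (hν i hi).1
    have h2 := (hν j hj).1
    have hij' : (i : ℝ) ≤ (j : ℝ) - 1 := by
      have : i + 1 ≤ j := hij
      have : ((i : ℝ) + 1) ≤ (j : ℝ) := by exact_mod_cast this
      linarith
    have : (i : ℝ) * π / 2 ≤ ((j : ℝ) - 1) * π / 2 := by nlinarith
    calc ν i < (i : ℝ) * π / 2 := h1.2
      _ ≤ ((j : ℝ) - 1) * π / 2 := this
      _ < ν j := h2.1
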